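/- TPE expected improvement formula: under the TPE model p(x|y) = l(x) 1_{y<y*} + g(x) 1_{y≥y*} with γ = P(y < y*), the expected improvement EI_{y*}(x) = ∫_{-∞}^{y*} (y* - y) p(y|x) dy equals l(x)(γ y* - ∫_{-∞}^{y*} y p(y) dy) / (γ l(x) + (1-γ) g(x)); in particular EI_{y*}(x) is proportional to (γ + (g(x)/l(x))(1-γ))^{-1} wherever l(x) > 0. -/

import Mathlib

open MeasureTheory Set

private lemma tpe_aux_int {py : ℝ → ℝ} (hpy0 : ∀ y, 0 ≤ py y) (hpyint : Integrable py)
    {c : ℝ} (hc : IntegrableOn (fun y => y * py y) (Iio c)) (b : ℝ) :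
    IntegrableOn (fun y => y * py y) (Iio b) := by
  rcases le_or_gt b c with h | h
  · exact hc.mono_set (Iio_subset_Iio h)
  · rw [← Iio_union_Ico_eq_Iio h.le]
    refine hc.union ?_
    set M := max |c| |b| with hM
    have hm : AEStronglyMeasurable (fun y => y * py y)
        (volume.restrict (Ico c b)) :=
      (aestronglyMeasurable_id.mul hpyint.1).restrict
    refine Integrable.mono ((hpyint.const_mul M).integrableOn) hm ?_
    filter_upwards [ae_restrict_mem measurableSet_Ico] with y hy
    have hy1 : |y| ≤ M := by
      rw [abs_le]
      constructor
      · have := neg_abs_le c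
        have := le_max_left |c| |b|
        linarith [hy.1]
      · have := le_abs_self b
        have := le_max_right |c| |b|
        linarith [hy.2]
    have hM0 : 0 ≤ M := le_trans (abs_nonneg y) hy1
    rw [norm_mul, Real.norm_eq_abs, Real.norm_eq_abs, Real.norm_eq_abs,
      abs_of_nonneg (hpy0 y), abs_mul, abs_of_nonneg hM0, abs_of_nonneg (hpy0 y)]
    exact mul_le_mul_of_nonneg_right hy1 (hpy0 y)

/-- TPE expected improvement formula: under the model
`p(x|y) = l(x) 1_{y<y*} + g(x) 1_{y≥y*}` with `γ = P(y < y*)` and Bayes' rule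
`p(y|x) = p(x|y) p(y) / p(x)`, `p(x) = γ l(x) + (1-γ) g(x)`, the expected improvement
`EI_{y*}(x) = ∫_{-∞}^{y*} (y* - y) p(y|x) dy` equals
`l(x) (γ y* - ∫_{-∞}^{y*} y p(y) dy) / (γ l(x) + (1-γ) g(x))`; in particular, where
`l(x) > 0` it equals `(γ y* - ∫_{-∞}^{y*} y p(y) dy) · (γ + (g(x)/l(x))(1-γ))⁻¹`. -/
theorem tpe_expected_improvement {𝒳 : Type*}
    (py : ℝ → ℝ) (hpy0 : ∀ y, 0 ≤ py y)
    (hpy1 : ∫ y, py y = 1) (hpyint : Integrable py)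
    (hyint : IntegrableOn (fun y => y * py y) (Iio ystar))
    (ystar : ℝ) (l g : 𝒳 → ℝ)
    (hl : ∀ x, 0 ≤ l x) (hg : ∀ x, 0 ≤ g x)
    (γ : ℝ) (hγ : γ = ∫ y in Iio ystar, py y)
    (px : 𝒳 → ℝ) (hpx : ∀ x, px x = γ * l x + (1 - γ) * g x)
    (pxy : 𝒳 → ℝ → ℝ) (hpxy : ∀ x y, pxy x y = if y < ystar then l x else g x)
    (EI : 𝒳 → ℝ)
    (hEI : ∀ x, EI x = ∫ y in Iio ystar, (ystar - y) * (pxy x y * py y / px x)) :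
    (∀ x, EI x =
        l x * (γ * ystar - ∫ y in Iio ystar, y * py y) / (γ * l x + (1 - γ) * g x)) ∧
      (∀ x, 0 < l x → EI x =
        (γ * ystar - ∫ y in Iio ystar, y * py y) * (γ + g x / l x * (1 - γ))⁻¹) := by
  obtain ⟨c, hc⟩ : ∃ c, IntegrableOn (fun y => y * py y) (Iio c) volume := ⟨_, hyint⟩
  have hint : IntegrableOn (fun y => y * py y) (Iio ystar) volume :=
    tpe_aux_int hpy0 hpyint hc ystar
  have key : ∀ x, EI x =
      l x * (γ * ystar - ∫ y in Iio ystar, y * py y) / (γ * l x + (1 - γ) * g x) := by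
    intro x
    rw [hEI x, ← hpx x]
    have h1 : EqOn (fun y => (ystar - y) * (pxy x y * py y / px x))
        (fun y => (l x / px x) * (ystar * py y - y * py y)) (Iio ystar) := by
      intro y hy
      simp only [hpxy x y, if_pos (mem_Iio.mp hy)]
      ring
    rw [setIntegral_congr_fun measurableSet_Iio h1, integral_const_mul,
      integral_sub ((hpyint.integrableOn).const_mul ystar) hint,
      integral_const_mul, ← hγ]
    field_simp
  refine ⟨key, fun x hx => ?_⟩
  have hden : γ * l x + (1 - γ) * g x = l x * (γ + g x / l x * (1 - γ)) := by
    field_simp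
  rw [key x, hden, mul_div_mul_left _ _ hx.ne', div_eq_mul_inv]
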